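/- Let X be a real vector space, n ≥ 2, and let (·,·|·,...,·) be a weak n-inner product on X. If the vectors x₂,...,xₙ,x are linearly dependent, then (x,y|xₙ,...,x₂) = 0 for every y ∈ X. -/
import Mathlib


/-- A weak `n`-inner product on a real vector space `X`, where `n = m + 2 ≥ 2`.
The value `f x y v` represents `(x, y | xₙ, …, x₂)`, where the tuple
`v : Fin (m+1) → X` lists the conditioning vectors `xₙ, x_{n-1}, …, x₂`
(so `v 0 = xₙ`). -/
structure WeakNInner (X : Type*) [AddCommGroup X] [Module ℝ X] (m : ℕ) where
  f : X → X → (Fin (m + 1) → X) → ℝ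
  /-- P1 (positivity) -/
  nonneg : ∀ (x : X) (v : Fin (m + 1) → X), 0 ≤ f x x v
  /-- P1 (definiteness): `(x,x|xₙ,…,x₂) = 0` iff `x, x₂, …, xₙ` are linearly dependent. -/
  eq_zero_iff : ∀ (x : X) (v : Fin (m + 1) → X),
    f x x v = 0 ↔ ¬ LinearIndependent ℝ (Fin.cons x v : Fin (m + 2) → X)
  /-- P2 (interchangeability): `(x,x|xₙ,x_{n-1},…,x₂) = (xₙ,xₙ|x,x_{n-1},…,x₂)`. -/
  interchange : ∀ (x : X) (v : Fin (m + 1) → X),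
    f x x v = f (v 0) (v 0) (Function.update v 0 x)
  /-- P3 (symmetry) -/
  symm : ∀ (x y : X) (v : Fin (m + 1) → X), f x y v = f y x v
  /-- P4 (homogeneity) -/
  smul_left : ∀ (α : ℝ) (x y : X) (v : Fin (m + 1) → X),
    f (α • x) y v = α * f x y v
  /-- P5 (additivity) -/
  add_left : ∀ (x x' y : X) (v : Fin (m + 1) → X),
    f (x + x') y v = f x y v + f x' y v

/-- If `x₂, …, xₙ, x` are linearly dependent, then `(x, y | xₙ, …, x₂) = 0`. -/
theorem weakNInner_eq_zero_of_dependent {X : Type*} [AddCommGroup X] [Module ℝ X]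
    {m : ℕ} (P : WeakNInner X m) (x y : X) (v : Fin (m + 1) → X)
    (h : ¬ LinearIndependent ℝ (Fin.cons x v : Fin (m + 2) → X)) :
    P.f x y v = 0 := by
  have hxx : P.f x x v = 0 := (P.eq_zero_iff x v).mpr h
  have hb := P.nonneg y v
  have key : ∀ t : ℝ, 0 ≤ 2 * t * P.f x y v + t ^ 2 * P.f y y v := by
    intro t
    have h0 := P.nonneg (x + t • y) v
    have e : P.f (x + t • y) (x + t • y) v
        = P.f x x v + 2 * t * P.f x y v + t ^ 2 * P.f y y v := by
      have e2 : P.f x (t • y) v = t * P.f x y v := by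
        rw [P.symm, P.smul_left, P.symm]
      have e3 : P.f (t • y) (t • y) v = t ^ 2 * P.f y y v := by
        rw [P.smul_left, P.symm, P.smul_left, P.symm]; ring
      rw [P.add_left, P.symm x (x + t • y) v, P.symm (t • y) (x + t • y) v,
        P.add_left, P.add_left, P.smul_left, e2, e3, P.symm y x v]
      ring
    rw [e, hxx] at h0
    linarith
  set a := P.f x y v with ha
  set b := P.f y y v with hbdef
  have hk := key (-a / (b + 1))
  have hb1 : (0:ℝ) < b + 1 := by linarith
  have : a ^ 2 * (b + 2) ≤ 0 := by
    have h2 : 2 * (-a / (b + 1)) * a + (-a / (b + 1)) ^ 2 * b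
        = (-(a ^ 2 * (b + 2))) / (b + 1) ^ 2 := by
      field_simp
      ring
    rw [h2] at hk
    have hpos : (0:ℝ) < (b + 1) ^ 2 := by positivity
    rcases div_nonneg_iff.mp hk with ⟨h4, _⟩ | ⟨_, h5⟩
    · nlinarith
    · linarith
  nlinarith [sq_nonneg a]
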